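/- Let S be a set of states with a set A of actions, a partial successor function succ : S × A ⇀ S, and a set G ⊆ S of goal states; let d(s) denote the minimal number of actions in a plan from s (d(s) = 0 for s ∈ G, and d(s) = ∞ if no plan exists). Let π assign to each state s a subset π(s) of the actions applicable in s, and suppose that for every state s with 0 < d(s) < ∞ there exists a ∈ π(s) with d(succ(s, a)) = d(s) − 1. Then for every state s, the minimal length of a π-restricted plan from s equals d(s); in particular, pruning the applicable actions at every state to π preserves both solvability and optimal plan length. (Optimality-preserving state-space pruning by rules.) -/

import Mathlib

/-- `PlanFrom succ G s l`: the action sequence `l` is a plan from `s` in the transition system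
with partial successor function `succ` and goal states `G`: each action is applicable in the
successively progressed state and the final state is a goal state. -/
inductive PlanFrom {S A : Type*} (succ : S → A → Option S) (G : Set S) : S → List A → Prop
  | nil {s : S} : s ∈ G → PlanFrom succ G s []
  | cons {s s' : S} {a : A} {l : List A} :
      succ s a = some s' → PlanFrom succ G s' l → PlanFrom succ G s (a :: l)

/-- `RPlanFrom succ G π s l`: `l` is a `π`-restricted plan from `s`, i.e. a plan in which each
action belongs to `π` of the state in which it is applied. -/
inductive RPlanFrom {S A : Type*} (succ : S → A → Option S) (G : Set S) (π : S → Set A) :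
    S → List A → Prop
  | nil {s : S} : s ∈ G → RPlanFrom succ G π s []
  | cons {s s' : S} {a : A} {l : List A} :
      a ∈ π s → succ s a = some s' → RPlanFrom succ G π s' l → RPlanFrom succ G π s (a :: l)

/-- The minimal length (in `ℕ∞`, with `⊤` when no plan exists) of a plan from `s` with respect
to the plan predicate `P`. -/
noncomputable def minLen {S A : Type*} (P : S → List A → Prop) (s : S) : ℕ∞ :=
  sInf {n : ℕ∞ | ∃ l, P s l ∧ (l.length : ℕ∞) = n}


section
variable {S A : Type*}

lemma minLen_le {P : S → List A → Prop} {s : S} {l : List A} (h : P s l) :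
    minLen P s ≤ l.length := sInf_le ⟨l, h, rfl⟩

lemma minLen_top_of_not_exists {P : S → List A → Prop} {s : S}
    (h : ¬∃ l, P s l) : minLen P s = ⊤ := by
  push_neg at h
  have : {n : ℕ∞ | ∃ l, P s l ∧ (l.length : ℕ∞) = n} = ∅ := by
    ext n; simp only [Set.mem_setOf_eq, Set.mem_empty_iff_false, iff_false]
    rintro ⟨l, hl, -⟩; exact h l hl
  simp [minLen, this]

lemma minLen_attained {P : S → List A → Prop} {s : S} (h : ∃ l, P s l) :
    ∃ l, P s l ∧ minLen P s = l.length := by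
  have hN : {k : ℕ | ∃ l, P s l ∧ l.length = k}.Nonempty := by
    obtain ⟨l, hl⟩ := h; exact ⟨l.length, l, hl, rfl⟩
  obtain ⟨l, hl, hlen⟩ := Nat.sInf_mem hN
  refine ⟨l, hl, le_antisymm (minLen_le hl) ?_⟩
  rw [minLen]
  refine le_sInf ?_
  rintro n ⟨l', hl', rfl⟩
  have : sInf {k : ℕ | ∃ l, P s l ∧ l.length = k} ≤ l'.length :=
    Nat.sInf_le ⟨l', hl', rfl⟩
  rw [hlen]; exact_mod_cast this

lemma exists_of_lt_top {P : S → List A → Prop} {s : S} (h : minLen P s < ⊤) :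
    ∃ l, P s l := by
  by_contra hc; exact absurd (minLen_top_of_not_exists hc) h.ne

end

/-- Optimality-preserving state-space pruning by rules: let `π` assign to each state a subset
of the actions applicable in it, and suppose that for every state `s` with `0 < d(s) < ∞`
there is `a ∈ π(s)` with `d(succ(s, a)) = d(s) − 1`, where `d` is the minimal plan length.
Then for every state `s` the minimal length of a `π`-restricted plan from `s` equals `d(s)`;
in particular pruning the applicable actions to `π` preserves solvability and optimal plan
length. -/
theorem stmt13 {S A : Type*} (succ : S → A → Option S) (G : Set S) (π : S → Set A)
    (happ : ∀ s : S, ∀ a ∈ π s, ∃ s', succ s a = some s')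
    (hπ : ∀ s : S, 0 < minLen (PlanFrom succ G) s → minLen (PlanFrom succ G) s < ⊤ →
      ∃ a ∈ π s, ∃ s', succ s a = some s' ∧
        minLen (PlanFrom succ G) s' + 1 = minLen (PlanFrom succ G) s) :
    ∀ s : S, minLen (RPlanFrom succ G π) s = minLen (PlanFrom succ G) s := by
  have mono : ∀ t, minLen (PlanFrom succ G) t ≤ minLen (RPlanFrom succ G π) t := by
    intro t
    have conv : ∀ u : S, ∀ l : List A, RPlanFrom succ G π u l → PlanFrom succ G u l := by
      intro u l hl
      induction hl with
      | nil h => exact .nil h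
      | cons ha hsucc _ ih => exact .cons hsucc ih
    simp only [minLen]
    exact sInf_le_sInf (fun n ⟨l, hl, e⟩ => ⟨l, conv _ _ hl, e⟩)
  have key : ∀ n : ℕ, ∀ t : S, minLen (PlanFrom succ G) t = n →
      minLen (RPlanFrom succ G π) t ≤ n := by
    intro n
    induction n with
    | zero =>
      intro t ht
      obtain ⟨l, hl, hlen⟩ := minLen_attained (P := PlanFrom succ G) (s := t)
        (exists_of_lt_top (by rw [ht]; exact ENat.coe_lt_top 0))
      rw [ht] at hlen
      have : l = [] := by
        have : l.length = 0 := by exact_mod_cast hlen.symm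
        exact List.length_eq_zero_iff.mp this
      subst this
      cases hl with
      | nil h => simpa using minLen_le (RPlanFrom.nil (succ := succ) (π := π) h)
    | succ n ih =>
      intro t ht
      have h1 : 0 < minLen (PlanFrom succ G) t := by
        rw [ht]; exact_mod_cast Nat.succ_pos n
      have h2 : minLen (PlanFrom succ G) t < ⊤ := by rw [ht]; exact ENat.coe_lt_top _
      obtain ⟨a, ha, s', hsucc, heq⟩ := hπ t h1 h2
      rw [ht] at heq
      have hne : minLen (PlanFrom succ G) s' ≠ ⊤ := by
        intro h; rw [h] at heq
        have h' : ((n : ℕ∞) + 1) ≠ ⊤ := by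
          rw [show ((n : ℕ∞) + 1) = ((n + 1 : ℕ) : ℕ∞) by push_cast; ring]
          exact ENat.coe_ne_top _
        exact h' heq.symm
      lift minLen (PlanFrom succ G) s' to ℕ using hne with m hm
      have hmn : m = n := by
        have : m + 1 = n + 1 := by exact_mod_cast heq
        omega
      subst hmn
      have hRle : minLen (RPlanFrom succ G π) s' ≤ (m : ℕ∞) := ih s' hm.symm
      have hRlt : minLen (RPlanFrom succ G π) s' < ⊤ :=
        lt_of_le_of_lt hRle (ENat.coe_lt_top m)
      obtain ⟨l, hl, hlen⟩ := minLen_attained (exists_of_lt_top hRlt)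
      have hplan : RPlanFrom succ G π t (a :: l) := .cons ha hsucc hl
      calc minLen (RPlanFrom succ G π) t ≤ ((a :: l).length : ℕ∞) := minLen_le hplan
        _ = (l.length : ℕ∞) + 1 := by push_cast [List.length_cons]; ring
        _ ≤ (m : ℕ∞) + 1 := by
            have : (l.length : ℕ∞) ≤ (m : ℕ∞) := hlen ▸ hRle
            exact add_le_add_left this 1
        _ = ((m + 1 : ℕ) : ℕ∞) := by push_cast; ring
  intro s
  refine le_antisymm ?_ (mono s)
  rcases eq_top_or_lt_top (minLen (PlanFrom succ G) s) with htop | hlt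
  · rw [htop]; exact le_top
  · obtain ⟨n, hn⟩ := WithTop.ne_top_iff_exists.mp hlt.ne
    rw [← hn]; exact key n s hn.symm
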